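/- (Theorem 1, core rank statement) Let F_q(x) have distinct rational places P₁, …, P_s and a place P_∞ of degree μ distinct from these. Let β_j^{(i)} be chosen as in Lemma 1 (β_j^{(1)} ∈ L((j−1)(P₁ − P₂)) \ {0}, β_j^{(i)} ∈ L(j(P_i − P₁)) \ {0}). Suppose ℓ ∈ ℕ and d₁, …, d_s ∈ ℕ₀ with 1 ≤ d₁ + ⋯ + d_s ≤ ℓμ, and suppose β := Σ_{i=1}^s Σ_{j=1}^{d_i} b_j^{(i)} β_j^{(i)} satisfies ν_{P_∞}(β) ≥ ℓ for some b_j^{(i)} ∈ F_q. Then all b_j^{(i)} = 0. -/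
import Mathlib


open scoped BigOperators

/-- An algebraic function field `F` of one variable over the full constant field `K`,
presented through the set of its places: each place `P` has a normalized discrete
valuation `v P` (its value on `0` is irrelevant/junk) and a degree `deg P ≥ 1`.
The axioms are the standard facts: multiplicativity and the ultrametric inequality of
valuations, triviality on constants, finiteness of the support of a principal divisor,
the degree formula `deg(div f) = 0`, the full-constant-field property, and the fact
that places of degree one have residue field `K`. -/
structure FFPlaces (K F : Type*) [Field K] [Field F] [Algebra K F] where
  Place : Type
  v : Place → F → ℤ
  deg : Place → ℕ
  deg_pos : ∀ P, 0 < deg P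
  v_mul : ∀ (P) (x y : F), x ≠ 0 → y ≠ 0 → v P (x * y) = v P x + v P y
  v_add : ∀ (P) (x y : F), x ≠ 0 → y ≠ 0 → x + y ≠ 0 → min (v P x) (v P y) ≤ v P (x + y)
  v_algebraMap : ∀ (P) (c : K), c ≠ 0 → v P (algebraMap K F c) = 0
  finite_support : ∀ f : F, f ≠ 0 → {P | v P f ≠ 0}.Finite
  degree_formula : ∀ f : F, f ≠ 0 → (∑ᶠ P, (deg P : ℤ) * v P f) = 0
  full_constants : ∀ f : F, f ≠ 0 → (∀ P, 0 ≤ v P f) → ∃ c : K, f = algebraMap K F c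
  residue_one : ∀ P, deg P = 1 → ∀ f g : F, f ≠ 0 → g ≠ 0 → v P f = v P g →
      ∃ c : K, f = algebraMap K F c * g ∨ v P f < v P (f - algebraMap K F c * g)

namespace FFPlaces

variable {K F : Type*} [Field K] [Field F] [Algebra K F]

/-- The degree of a divisor (a finitely supported `ℤ`-valued function on places). -/
def degD (FF : FFPlaces K F) (D : FF.Place →₀ ℤ) : ℤ :=
  ∑ P ∈ D.support, (FF.deg P : ℤ) * D P

/-- The Riemann–Roch space `L(D) = {f ∈ F* : div f + D ≥ 0} ∪ {0}` of a divisor `D`,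
as a `K`-subspace of `F`. -/
def RR (FF : FFPlaces K F) (D : FF.Place →₀ ℤ) : Submodule K F where
  carrier := {f | f = 0 ∨ ∀ P, -(D P) ≤ FF.v P f}
  zero_mem' := Or.inl rfl
  add_mem' := by
    intro a b ha hb
    simp only [Set.mem_setOf_eq] at *
    by_cases ha0 : a = 0
    · simpa [ha0] using hb
    by_cases hb0 : b = 0
    · simpa [hb0] using ha
    by_cases hab : a + b = 0
    · exact Or.inl hab
    have ha' := ha.resolve_left ha0
    have hb' := hb.resolve_left hb0
    exact Or.inr fun P =>
      le_trans (le_min (ha' P) (hb' P)) (FF.v_add P a b ha0 hb0 hab)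
  smul_mem' := by
    intro c x hx
    simp only [Set.mem_setOf_eq] at *
    by_cases hc : c = 0
    · left; simp [hc]
    by_cases hx0 : x = 0
    · left; simp [hx0]
    have hx' := hx.resolve_left hx0
    have halg : algebraMap K F c ≠ 0 :=
      (map_ne_zero_iff (algebraMap K F) (RingHom.injective _)).mpr hc
    refine Or.inr fun P => ?_
    rw [Algebra.smul_def, FF.v_mul P _ x halg hx0, FF.v_algebraMap P c hc]
    simpa using hx' P

end FFPlaces

namespace FFPlaces

variable {K F : Type*} [Field K] [Field F] [Algebra K F] (FF : FFPlaces K F)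

lemma mem_RR_iff (D : FF.Place →₀ ℤ) (f : F) :
    f ∈ FF.RR D ↔ f = 0 ∨ ∀ P, -(D P) ≤ FF.v P f := Iff.rfl

lemma v_neg' (Q : FF.Place) (x : F) (hx : x ≠ 0) : FF.v Q (-x) = FF.v Q x := by
  have h1 : ((-1 : K)) ≠ 0 := by norm_num
  have halg : (algebraMap K F (-1)) ≠ 0 := by simp
  have hrw : -x = algebraMap K F (-1) * x := by simp
  rw [hrw, FF.v_mul Q _ x halg hx, FF.v_algebraMap Q _ h1, zero_add]

lemma v_smul' (Q : FF.Place) (c : K) (x : F) (hc : c ≠ 0) (hx : x ≠ 0) :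
    c • x ≠ 0 ∧ FF.v Q (c • x) = FF.v Q x := by
  have halg : (algebraMap K F c) ≠ 0 := by
    simpa using (map_ne_zero_iff (algebraMap K F) (RingHom.injective _)).mpr hc
  refine ⟨smul_ne_zero hc hx, ?_⟩
  rw [Algebra.smul_def, FF.v_mul Q _ x halg hx, FF.v_algebraMap Q c hc, zero_add]

lemma bound_add' (Q : FF.Place) (c : ℤ) (x y : F)
    (hx : x = 0 ∨ (x ≠ 0 ∧ c ≤ FF.v Q x)) (hy : y = 0 ∨ (y ≠ 0 ∧ c ≤ FF.v Q y)) :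
    x + y = 0 ∨ (x + y ≠ 0 ∧ c ≤ FF.v Q (x + y)) := by
  rcases hx with rfl | ⟨hx0, hxc⟩
  · simpa using hy
  rcases hy with rfl | ⟨hy0, hyc⟩
  · simpa using Or.inr ⟨hx0, hxc⟩
  by_cases hxy : x + y = 0
  · exact Or.inl hxy
  exact Or.inr ⟨hxy, le_trans (le_min hxc hyc) (FF.v_add Q x y hx0 hy0 hxy)⟩

lemma sum_bound' {ι : Type*} (Q : FF.Place) (c : ℤ) (T : Finset ι) (g : ι → F)
    (h : ∀ t ∈ T, g t = 0 ∨ c ≤ FF.v Q (g t)) :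
    (∑ t ∈ T, g t) = 0 ∨ ((∑ t ∈ T, g t) ≠ 0 ∧ c ≤ FF.v Q (∑ t ∈ T, g t)) := by
  refine Finset.sum_induction g (fun x => x = 0 ∨ (x ≠ 0 ∧ c ≤ FF.v Q x))
    (FF.bound_add' Q c) (Or.inl rfl) ?_
  intro t ht
  rcases h t ht with h0 | hc
  · exact Or.inl h0
  · by_cases h0 : g t = 0
    · exact Or.inl h0
    · exact Or.inr ⟨h0, hc⟩

lemma dominant' (Q : FF.Place) (x y : F) (hx : x ≠ 0)
    (hy : y = 0 ∨ (y ≠ 0 ∧ FF.v Q x < FF.v Q y)) :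
    x + y ≠ 0 ∧ FF.v Q (x + y) = FF.v Q x := by
  rcases hy with rfl | ⟨hy0, hlt⟩
  · simpa using hx
  have hxy : x + y ≠ 0 := by
    intro h
    have hyx : y = -x := by linear_combination h
    rw [hyx, FF.v_neg' Q x hx] at hlt
    exact lt_irrefl _ hlt
  have h1 : min (FF.v Q x) (FF.v Q y) ≤ FF.v Q (x + y) := FF.v_add Q x y hx hy0 hxy
  have h2 : min (FF.v Q (x + y)) (FF.v Q (-y)) ≤ FF.v Q (x + y + -y) :=
    FF.v_add Q (x + y) (-y) hxy (neg_ne_zero.mpr hy0) (by simpa using hx)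
  rw [FF.v_neg' Q y hy0] at h2
  rw [show x + y + -y = x by ring] at h2
  exact ⟨hxy, by omega⟩

lemma deg_sum_le' (f : F) (hf : f ≠ 0) (S : Finset FF.Place)
    (h : ∀ Q ∉ S, 0 ≤ FF.v Q f) :
    ∑ Q ∈ S, (FF.deg Q : ℤ) * FF.v Q f ≤ 0 := by
  classical
  have hfin := FF.finite_support f hf
  have hsub : S ⊆ S ∪ hfin.toFinset := Finset.subset_union_left
  have h0 : ∑ Q ∈ S ∪ hfin.toFinset, (FF.deg Q : ℤ) * FF.v Q f = 0 := by
    refine Eq.trans (finsum_eq_sum_of_support_subset _ ?_).symm (FF.degree_formula f hf)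
    intro Q hQ
    simp only [Function.mem_support] at hQ
    have hv : FF.v Q f ≠ 0 := by
      intro h'; exact hQ (by simp [h'])
    simp only [Finset.coe_union, Set.mem_union, Finset.mem_coe,
      Set.Finite.mem_toFinset]
    exact Or.inr hv
  have hle : ∑ Q ∈ S, (FF.deg Q : ℤ) * FF.v Q f
      ≤ ∑ Q ∈ S ∪ hfin.toFinset, (FF.deg Q : ℤ) * FF.v Q f :=
    Finset.sum_le_sum_of_subset_of_nonneg hsub
      (fun Q _ hQS => mul_nonneg (by positivity) (h Q hQS))
  omega

lemma v_exact' (f : F) (hf : f ≠ 0) (Q Q' : FF.Place) (hQQ : Q ≠ Q')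
    (hdQ : FF.deg Q = 1) (hdQ' : FF.deg Q' = 1) (a : ℤ)
    (hQ'v : a ≤ FF.v Q' f) (hrest : ∀ R, R ≠ Q → R ≠ Q' → 0 ≤ FF.v R f) :
    FF.v Q f ≤ -a := by
  classical
  have hsum := FF.deg_sum_le' f hf {Q, Q'} (fun R hR => by
    simp only [Finset.mem_insert, Finset.mem_singleton, not_or] at hR
    exact hrest R hR.1 hR.2)
  rw [Finset.sum_pair hQQ, hdQ, hdQ'] at hsum
  push_cast at hsum
  linarith

end FFPlaces


open Finsupp in
/-- Theorem 1 of the paper (core rank statement). In the rational function field `Fq(x)`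
(genus `0`; Riemann–Roch is recorded in `hRR`) with distinct rational places
`P 0, …, P (s-1)` (the paper's `P₁, …, P_s`) and a further place `Pinf` of degree `μ`,
choose nonzero `β_j^{(1)} ∈ L((j-1)(P₁ - P₂))` and nonzero `β_j^{(i)} ∈ L(j(P_i - P₁))`
as in Lemma 1. If `ℓ ≥ 1`, `1 ≤ d₁ + ⋯ + d_s ≤ ℓμ`, and
`β = ∑_{i=1}^s ∑_{j=1}^{d_i} b_j^{(i)} β_j^{(i)}` satisfies `ν_{Pinf}(β) ≥ ℓ`
(with the convention `ν_{Pinf}(0) = ∞`), then all `b_j^{(i)} = 0`. -/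
theorem theorem1_rank (Fq : Type*) [Field Fq] [Fintype Fq]
    (FF : FFPlaces Fq (RatFunc Fq))
    (hRR : ∀ D : FF.Place →₀ ℤ, -1 ≤ FF.degD D →
      (Module.finrank Fq (FF.RR D) : ℤ) = FF.degD D + 1)
    (s : ℕ) [NeZero s] (hs2 : 2 ≤ s) (P : Fin s → FF.Place)
    (hP : Function.Injective P) (hPdeg : ∀ i, FF.deg (P i) = 1)
    (μ : ℕ) (hμ : 1 ≤ μ) (Pinf : FF.Place) (hPinfdeg : FF.deg Pinf = μ)
    (hPinfne : ∀ i, Pinf ≠ P i)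
    (β : Fin s → ℕ → RatFunc Fq)
    (hβ1 : ∀ j : ℕ, 1 ≤ j → β 0 j ≠ 0 ∧
      β 0 j ∈ FF.RR (single (P 0) ((j : ℤ) - 1) - single (P 1) ((j : ℤ) - 1)))
    (hβi : ∀ i : Fin s, i ≠ 0 → ∀ j : ℕ, 1 ≤ j → β i j ≠ 0 ∧
      β i j ∈ FF.RR (single (P i) (j : ℤ) - single (P 0) (j : ℤ)))
    (ℓ : ℕ) (hℓ : 1 ≤ ℓ) (d : Fin s → ℕ)
    (hd1 : 1 ≤ ∑ i, d i) (hd2 : ∑ i, d i ≤ ℓ * μ)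
    (b : Fin s → ℕ → Fq)
    (hval : (∑ i, ∑ j ∈ Finset.Icc 1 (d i), b i j • β i j) = 0 ∨
      (ℓ : ℤ) ≤ FF.v Pinf (∑ i, ∑ j ∈ Finset.Icc 1 (d i), b i j • β i j)) :
    ∀ (i : Fin s) (j : ℕ), 1 ≤ j → j ≤ d i → b i j = 0 := by
  classical
  intro i₀ j₀ hj₀1 hj₀2
  by_contra hb0ne
  set f := ∑ i, ∑ j ∈ Finset.Icc 1 (d i), b i j • β i j with hfdef
  have h01 : (0 : Fin s) ≠ 1 := by
    intro h
    have h' := congrArg Fin.val h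
    rw [Fin.val_zero, Fin.val_one'] at h'
    rw [Nat.mod_eq_of_lt (by omega)] at h'
    exact absurd h' (by omega)
  have hP01 : P 0 ≠ P 1 := fun h => h01 (hP h)
  -- exact/lower valuation facts for the β's
  have hv1 : ∀ j : ℕ, 1 ≤ j →
      (∀ R, R ≠ P 0 → R ≠ P 1 → 0 ≤ FF.v R (β 0 j)) ∧
      ((j : ℤ) - 1 ≤ FF.v (P 1) (β 0 j)) ∧
      FF.v (P 0) (β 0 j) = -((j : ℤ) - 1) := by
    intro j hj
    obtain ⟨hne, hmem⟩ := hβ1 j hj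
    have hm := ((FF.mem_RR_iff _ _).1 hmem).resolve_left hne
    have hO : ∀ R, R ≠ P 0 → R ≠ P 1 → 0 ≤ FF.v R (β 0 j) := by
      intro R h0 h1
      have := hm R
      simpa [Finsupp.single_apply, Ne.symm h0, Ne.symm h1] using this
    have h1b : (j : ℤ) - 1 ≤ FF.v (P 1) (β 0 j) := by
      have := hm (P 1)
      simpa [Finsupp.single_apply, hP01] using this
    have h0b : -((j : ℤ) - 1) ≤ FF.v (P 0) (β 0 j) := by
      have := hm (P 0)
      simpa [Finsupp.single_apply, Ne.symm hP01] using this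
    exact ⟨hO, h1b, le_antisymm
      (FF.v_exact' _ hne (P 0) (P 1) hP01 (hPdeg 0) (hPdeg 1) ((j : ℤ) - 1) h1b hO) h0b⟩
  have hvi : ∀ i : Fin s, i ≠ 0 → ∀ j : ℕ, 1 ≤ j →
      (∀ R, R ≠ P i → R ≠ P 0 → 0 ≤ FF.v R (β i j)) ∧
      ((j : ℤ) ≤ FF.v (P 0) (β i j)) ∧
      FF.v (P i) (β i j) = -(j : ℤ) := by
    intro i hi j hj
    have hPi0 : P i ≠ P 0 := fun h => hi (hP h)
    obtain ⟨hne, hmem⟩ := hβi i hi j hj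
    have hm := ((FF.mem_RR_iff _ _).1 hmem).resolve_left hne
    have hO : ∀ R, R ≠ P i → R ≠ P 0 → 0 ≤ FF.v R (β i j) := by
      intro R h0 h1
      have := hm R
      simpa [Finsupp.single_apply, Ne.symm h0, Ne.symm h1] using this
    have h1b : (j : ℤ) ≤ FF.v (P 0) (β i j) := by
      have := hm (P 0)
      simpa [Finsupp.single_apply, hPi0] using this
    have h0b : -(j : ℤ) ≤ FF.v (P i) (β i j) := by
      have := hm (P i)
      simpa [Finsupp.single_apply, Ne.symm hPi0] using this
    exact ⟨hO, h1b, le_antisymm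
      (FF.v_exact' _ hne (P i) (P 0) hPi0 (hPdeg i) (hPdeg 0) (j : ℤ) h1b hO) h0b⟩
  have hβne : ∀ (i : Fin s) (j : ℕ), 1 ≤ j → β i j ≠ 0 := by
    intro i j hj
    rcases eq_or_ne i 0 with rfl | hi
    · exact (hβ1 j hj).1
    · exact (hβi i hi j hj).1
  have hterm : ∀ (i : Fin s) (j : ℕ), 1 ≤ j → ∀ (R : FF.Place) (c : ℤ),
      c ≤ FF.v R (β i j) →
      b i j • β i j = 0 ∨ (b i j • β i j ≠ 0 ∧ c ≤ FF.v R (b i j • β i j)) := by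
    intro i j hj R c hc
    by_cases hb : b i j = 0
    · exact Or.inl (by simp [hb])
    · obtain ⟨h1, h2⟩ := FF.v_smul' R (b i j) (β i j) hb (hβne i j hj)
      exact Or.inr ⟨h1, h2 ▸ hc⟩
  -- Step 1 : f ≠ 0
  have hfne : f ≠ 0 := by
    by_cases hcase : ∀ i : Fin s, i ≠ 0 → ∀ j ∈ Finset.Icc 1 (d i), b i j = 0
    · -- all nonzero coefficients are in row i = 0
      have hi₀ : i₀ = 0 := by
        by_contra h
        exact hb0ne (hcase i₀ h j₀ (Finset.mem_Icc.mpr ⟨hj₀1, hj₀2⟩))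
      subst hi₀
      set T := (Finset.Icc 1 (d 0)).filter (fun j => b 0 j ≠ 0) with hTdef
      have hTne : T.Nonempty :=
        ⟨j₀, Finset.mem_filter.mpr ⟨Finset.mem_Icc.mpr ⟨hj₀1, hj₀2⟩, hb0ne⟩⟩
      set m := T.max' hTne with hmdef
      have hmT : m ∈ T := T.max'_mem hTne
      have hmIcc : m ∈ Finset.Icc 1 (d 0) := (Finset.mem_filter.mp hmT).1
      have hbm : b 0 m ≠ 0 := (Finset.mem_filter.mp hmT).2
      have hm1 : 1 ≤ m := (Finset.mem_Icc.mp hmIcc).1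
      obtain ⟨hlne, hlv⟩ := FF.v_smul' (P 0) (b 0 m) (β 0 m) hbm (hβne 0 m hm1)
      rw [(hv1 m hm1).2.2] at hlv
      have hrest := FF.sum_bound' (P 0) (-((m : ℤ) - 1) + 1)
        ((Finset.Icc 1 (d 0)).erase m) (fun j => b 0 j • β 0 j) (by
          intro j hj
          have hjm : j ≠ m := (Finset.mem_erase.mp hj).1
          have hjIcc := (Finset.mem_erase.mp hj).2
          have hj1 : 1 ≤ j := (Finset.mem_Icc.mp hjIcc).1
          by_cases hb : b 0 j = 0
          · exact Or.inl (by simp [hb])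
          · have hjT : j ∈ T := Finset.mem_filter.mpr ⟨hjIcc, hb⟩
            have hjlt : j < m := lt_of_le_of_ne (T.le_max' j hjT) hjm
            refine (hterm 0 j hj1 (P 0) _ ?_).imp_right And.right
            rw [(hv1 j hj1).2.2]
            have : (j : ℤ) < m := by exact_mod_cast hjlt
            omega)
      have hdom := FF.dominant' (P 0) (b 0 m • β 0 m) _ hlne
        (hrest.imp_right (fun h => ⟨h.1, by rw [hlv]; omega⟩))
      have hfeq : f = b 0 m • β 0 m +
          ∑ j ∈ (Finset.Icc 1 (d 0)).erase m, b 0 j • β 0 j := by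
        rw [hfdef]
        rw [Fintype.sum_eq_single 0 (fun i hi => Finset.sum_eq_zero
          (fun j hj => by rw [hcase i hi j hj, zero_smul]))]
        exact (Finset.add_sum_erase _ _ hmIcc).symm
      rw [hfeq]
      exact hdom.1
    · push_neg at hcase
      obtain ⟨i₁, hi₁0, j₁, hj₁Icc, hbj₁⟩ := hcase
      set T := (Finset.Icc 1 (d i₁)).filter (fun j => b i₁ j ≠ 0) with hTdef
      have hTne : T.Nonempty := ⟨j₁, Finset.mem_filter.mpr ⟨hj₁Icc, hbj₁⟩⟩
      set m := T.max' hTne with hmdef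
      have hmT : m ∈ T := T.max'_mem hTne
      have hmIcc : m ∈ Finset.Icc 1 (d i₁) := (Finset.mem_filter.mp hmT).1
      have hbm : b i₁ m ≠ 0 := (Finset.mem_filter.mp hmT).2
      have hm1 : 1 ≤ m := (Finset.mem_Icc.mp hmIcc).1
      have hm1' : (1 : ℤ) ≤ m := by exact_mod_cast hm1
      obtain ⟨hlne, hlv⟩ := FF.v_smul' (P i₁) (b i₁ m) (β i₁ m) hbm (hβne i₁ m hm1)
      rw [(hvi i₁ hi₁0 m hm1).2.2] at hlv
      have hQ0 : ∀ (i : Fin s) (j : ℕ), 1 ≤ j → i ≠ i₁ → 0 ≤ FF.v (P i₁) (β i j) := by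
        intro i j hj hii
        rcases eq_or_ne i 0 with rfl | hi
        · rcases eq_or_ne i₁ 1 with rfl | h1
          · have := (hv1 j hj).2.1
            have hj' : (1 : ℤ) ≤ j := by exact_mod_cast hj
            omega
          · exact (hv1 j hj).1 (P i₁) (fun h => hi₁0 (hP h)) (fun h => h1 (hP h))
        · exact (hvi i hi j hj).1 (P i₁)
            (fun h => hii (hP h).symm) (fun h => hi₁0 (hP h))
      have hrest1 := FF.sum_bound' (P i₁) (-(m : ℤ) + 1)
        ((Finset.Icc 1 (d i₁)).erase m) (fun j => b i₁ j • β i₁ j) (by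
          intro j hj
          have hjm : j ≠ m := (Finset.mem_erase.mp hj).1
          have hjIcc := (Finset.mem_erase.mp hj).2
          have hj1 : 1 ≤ j := (Finset.mem_Icc.mp hjIcc).1
          by_cases hb : b i₁ j = 0
          · exact Or.inl (by simp [hb])
          · have hjT : j ∈ T := Finset.mem_filter.mpr ⟨hjIcc, hb⟩
            have hjlt : j < m := lt_of_le_of_ne (T.le_max' j hjT) hjm
            refine (hterm i₁ j hj1 (P i₁) _ ?_).imp_right And.right
            rw [(hvi i₁ hi₁0 j hj1).2.2]
            have : (j : ℤ) < m := by exact_mod_cast hjlt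
            omega)
      have hrest2 := FF.sum_bound' (P i₁) (-(m : ℤ) + 1)
        (Finset.univ.erase i₁)
        (fun i => ∑ j ∈ Finset.Icc 1 (d i), b i j • β i j) (by
          intro i hi
          have hii : i ≠ i₁ := (Finset.mem_erase.mp hi).1
          refine (FF.sum_bound' (P i₁) (-(m : ℤ) + 1) _ _ ?_).imp_right And.right
          intro j hj
          have hj1 : 1 ≤ j := (Finset.mem_Icc.mp hj).1
          refine (hterm i j hj1 (P i₁) _ ?_).imp_right And.right
          have := hQ0 i j hj1 hii
          omega)
      have hrestc := FF.bound_add' (P i₁) (-(m : ℤ) + 1) _ _ hrest1 hrest2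
      have hdom := FF.dominant' (P i₁) (b i₁ m • β i₁ m) _ hlne
        (hrestc.imp_right (fun h => ⟨h.1, by rw [hlv]; omega⟩))
      have hfeq : f = b i₁ m • β i₁ m +
          ((∑ j ∈ (Finset.Icc 1 (d i₁)).erase m, b i₁ j • β i₁ j) +
            ∑ i ∈ Finset.univ.erase i₁, ∑ j ∈ Finset.Icc 1 (d i), b i j • β i j) := by
        rw [hfdef, ← Finset.add_sum_erase _ _ (Finset.mem_univ i₁),
          ← Finset.add_sum_erase _ _ hmIcc, add_assoc]
      rw [hfeq]
      exact hdom.1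
  -- Step 2 : degree contradiction
  have hℓv : (ℓ : ℤ) ≤ FF.v Pinf f := hval.resolve_left hfne
  have hbP0 : 1 - (d 0 : ℤ) ≤ FF.v (P 0) f := by
    refine ((FF.sum_bound' (P 0) (1 - (d 0 : ℤ)) _ _ ?_).resolve_left hfne).2
    intro i _
    refine (FF.sum_bound' (P 0) (1 - (d 0 : ℤ)) _ _ ?_).imp_right And.right
    intro j hj
    have hj1 : 1 ≤ j := (Finset.mem_Icc.mp hj).1
    have hjd : j ≤ d i := (Finset.mem_Icc.mp hj).2
    refine (hterm i j hj1 (P 0) _ ?_).imp_right And.right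
    rcases eq_or_ne i 0 with rfl | hi
    · rw [(hv1 j hj1).2.2]
      have : (j : ℤ) ≤ d 0 := by exact_mod_cast hjd
      omega
    · have h1 := (hvi i hi j hj1).2.1
      have hj' : (1 : ℤ) ≤ j := by exact_mod_cast hj1
      have hd0 : (0 : ℤ) ≤ (d 0 : ℤ) := Int.natCast_nonneg _
      omega
  have hbPk : ∀ k : Fin s, k ≠ 0 → -(d k : ℤ) ≤ FF.v (P k) f := by
    intro k hk
    refine ((FF.sum_bound' (P k) (-(d k : ℤ)) _ _ ?_).resolve_left hfne).2
    intro i _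
    refine (FF.sum_bound' (P k) (-(d k : ℤ)) _ _ ?_).imp_right And.right
    intro j hj
    have hj1 : 1 ≤ j := (Finset.mem_Icc.mp hj).1
    have hjd : j ≤ d i := (Finset.mem_Icc.mp hj).2
    have hdk : (0 : ℤ) ≤ (d k : ℤ) := Int.natCast_nonneg _
    refine (hterm i j hj1 (P k) _ ?_).imp_right And.right
    rcases eq_or_ne i 0 with rfl | hi
    · rcases eq_or_ne k 1 with rfl | h1
      · have := (hv1 j hj1).2.1
        have hj' : (1 : ℤ) ≤ j := by exact_mod_cast hj1
        omega
      · have := (hv1 j hj1).1 (P k) (fun h => hk (hP h)) (fun h => h1 (hP h))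
        omega
    · rcases eq_or_ne i k with rfl | hik
      · have := (hvi i hi j hj1).2.2
        have hjd' : (j : ℤ) ≤ d i := by exact_mod_cast hjd
        omega
      · have := (hvi i hi j hj1).1 (P k)
          (fun h => hik (hP h).symm) (fun h => hk (hP h))
        omega
  have hbother : ∀ R : FF.Place, (∀ i, R ≠ P i) → 0 ≤ FF.v R f := by
    intro R hR
    refine ((FF.sum_bound' R 0 _ _ ?_).resolve_left hfne).2
    intro i _
    refine (FF.sum_bound' R 0 _ _ ?_).imp_right And.right
    intro j hj
    have hj1 : 1 ≤ j := (Finset.mem_Icc.mp hj).1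
    refine (hterm i j hj1 R _ ?_).imp_right And.right
    rcases eq_or_ne i 0 with rfl | hi
    · exact (hv1 j hj1).1 R (hR 0) (hR 1)
    · exact (hvi i hi j hj1).1 R (hR i) (hR 0)
  set S : Finset FF.Place := Finset.univ.image P ∪ {Pinf} with hSdef
  have hdegle := FF.deg_sum_le' f hfne S (by
    intro R hR
    simp only [hSdef, Finset.mem_union, Finset.mem_image, Finset.mem_univ, true_and,
      Finset.mem_singleton, not_or, not_exists] at hR
    exact hbother R (fun i h => hR.1 i h.symm))
  have hdisj : Pinf ∉ Finset.univ.image P := by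
    simp only [Finset.mem_image, Finset.mem_univ, true_and, not_exists]
    exact fun i h => hPinfne i h.symm
  have hsplit : ∑ Q ∈ S, (FF.deg Q : ℤ) * FF.v Q f
      = (∑ i : Fin s, FF.v (P i) f) + (μ : ℤ) * FF.v Pinf f := by
    rw [hSdef, Finset.sum_union (Finset.disjoint_singleton_right.mpr hdisj)]
    rw [Finset.sum_image (fun a _ c _ h => hP h), Finset.sum_singleton, hPinfdeg]
    congr 1
    refine Finset.sum_congr rfl (fun i _ => ?_)
    rw [hPdeg i]
    norm_num
  have hsum_lb : 1 - (∑ i, (d i : ℤ)) ≤ ∑ i : Fin s, FF.v (P i) f := by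
    have hle := Finset.sum_le_sum
      (s := Finset.univ) (f := fun i : Fin s => if i = 0 then 1 - (d 0 : ℤ) else -(d i : ℤ))
      (g := fun i : Fin s => FF.v (P i) f)
      (fun i _ => by
        rcases eq_or_ne i 0 with rfl | hi
        · simpa using hbP0
        · simpa [hi] using hbPk i hi)
    have heq : ∑ i : Fin s, (if i = 0 then 1 - (d 0 : ℤ) else -(d i : ℤ))
        = 1 - ∑ i, (d i : ℤ) := by
      rw [← Finset.add_sum_erase _ _ (Finset.mem_univ (0 : Fin s)),
        ← Finset.add_sum_erase _ (fun i : Fin s => (d i : ℤ)) (Finset.mem_univ (0 : Fin s))]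
      simp only [if_pos rfl]
      rw [Finset.sum_congr rfl (fun i hi => if_neg (Finset.mem_erase.mp hi).1)]
      rw [Finset.sum_neg_distrib]
      norm_num
    linarith [heq ▸ hle]
  have hd2' : ∑ i, (d i : ℤ) ≤ (μ : ℤ) * (ℓ : ℤ) := by
    have h' : ((∑ i, d i : ℕ) : ℤ) ≤ ((μ * ℓ : ℕ) : ℤ) := by
      exact_mod_cast hd2.trans_eq (Nat.mul_comm ℓ μ)
    push_cast at h'
    exact h'
  have hμv : (μ : ℤ) * (ℓ : ℤ) ≤ (μ : ℤ) * FF.v Pinf f :=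
    mul_le_mul_of_nonneg_left hℓv (Int.natCast_nonneg _)
  rw [hsplit] at hdegle
  linarith
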